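/- Let (X,d) be a complete metric space, and for each i ∈ ℕ let 𝓕_i = {f_{1,i},…,f_{n_i,i}} be a finite family of Lipschitz maps on X with L_i = max_{1≤r≤n_i} Lip(f_{r,i}). Assume there is a compact set C ⊆ X with f_{r,i}(C) ⊆ C for all r, i, and that ∑_{k=1}^∞ ∏_{i=1}^k L_i < ∞. Then there exists a unique nonempty compact set P ⊆ C such that for every nonempty compact A ⊆ C the backward SFS trajectories Ψ_k(A) = F_1 ∘ F_2 ∘ ⋯ ∘ F_k(A) converge to P in the Hausdorff metric, where F_i is the Hutchinson operator of 𝓕_i. -/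

import Mathlib

open Filter Topology TopologicalSpace

/-- The backward trajectory maps `Ψ_k = F₁ ∘ F₂ ∘ ⋯ ∘ F_k` (with `0`-based indexing). -/
def backwardTraj {α : Type*} (T : ℕ → α → α) : ℕ → α → α
  | 0 => id
  | k + 1 => backwardTraj T k ∘ T k

/-- (Corollary `backSFS`, convergence of backward SFS trajectories): for a sequence of
function systems `𝓕ᵢ = {f_{1,i},…,f_{nᵢ,i}}` of Lipschitz maps with contraction factors
`Lᵢ`, a compact invariant set `C`, and `∑_{k=1}^∞ ∏_{i=1}^k Lᵢ < ∞`, the backward SFS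
trajectories converge, for every nonempty compact initial set `A ⊆ C`, to one and the
same attractor `P ⊆ C`. -/
theorem backward_SFS_trajectories_converge
    {X : Type*} [MetricSpace X] [CompleteSpace X]
    (n : ℕ → ℕ) (hn : ∀ i, 0 < n i)
    (f : (i : ℕ) → Fin (n i) → X → X) (L : ℕ → NNReal)
    (hf : ∀ i r, LipschitzWith (L i) (f i r))
    (C : Set X) (hCc : IsCompact C) (hCne : C.Nonempty)
    (hinv : ∀ i r, Set.MapsTo (f i r) C C)
    (hsum : Summable fun k => ∏ i ∈ Finset.range (k + 1), (L i : ℝ))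
    (F : ℕ → NonemptyCompacts X → NonemptyCompacts X)
    (hF : ∀ i (B : NonemptyCompacts X), (F i B : Set X) = ⋃ r, f i r '' (B : Set X)) :
    ∃! P : NonemptyCompacts X, (P : Set X) ⊆ C ∧
      ∀ A : NonemptyCompacts X, (A : Set X) ⊆ C →
        Tendsto (fun k => backwardTraj F k A) atTop (𝓝 P) := by
  classical
  -- edist on NonemptyCompacts is the Hausdorff edistance
  have hedist : ∀ S T : NonemptyCompacts X,
      edist S T = EMetric.hausdorffEdist (S : Set X) (T : Set X) := fun _ _ => rfl
  -- one-sided estimate for the Hutchinson operators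
  have haux : ∀ i (A B : NonemptyCompacts X), ∀ x ∈ (F i A : Set X),
      EMetric.infEdist x (F i B : Set X) ≤ (L i : ENNReal) * edist A B := by
    intro i A B x hx
    rw [hF] at hx
    obtain ⟨r, a, ha, rfl⟩ := Set.mem_iUnion.1 hx
    obtain ⟨y, hy, hay⟩ := B.isCompact.exists_infEdist_eq_edist B.nonempty a
    have hmem : f i r y ∈ (F i B : Set X) := by
      rw [hF]; exact Set.mem_iUnion.2 ⟨r, Set.mem_image_of_mem _ hy⟩
    calc EMetric.infEdist (f i r a) (F i B : Set X)
        ≤ edist (f i r a) (f i r y) := EMetric.infEdist_le_edist_of_mem hmem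
      _ ≤ (L i : ENNReal) * edist a y := hf i r a y
      _ = (L i : ENNReal) * EMetric.infEdist a (B : Set X) := congrArg _ hay.symm
      _ ≤ (L i : ENNReal) * edist A B := by
          rw [hedist]
          exact mul_le_mul_right (EMetric.infEdist_le_hausdorffEdist_of_mem ha) _
  -- the Hutchinson operators are Lipschitz
  have hFlip : ∀ i, LipschitzWith (L i) (F i) := by
    intro i A B
    rw [hedist]
    refine EMetric.hausdorffEdist_le_of_infEdist (fun x hx => haux i A B x hx)
      (fun x hx => ?_)
    rw [edist_comm]
    exact haux i B A x hx
  -- the backward trajectories are Lipschitz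
  have hΨlip : ∀ k, LipschitzWith (∏ i ∈ Finset.range k, L i) (backwardTraj F k) := by
    intro k
    induction k with
    | zero => simpa [backwardTraj] using LipschitzWith.id
    | succ k ih =>
      have := ih.comp (hFlip k)
      rw [Finset.prod_range_succ]
      exact this
  -- invariance of C
  have hFC : ∀ i (A : NonemptyCompacts X), (A : Set X) ⊆ C → (F i A : Set X) ⊆ C := by
    intro i A hA
    rw [hF]
    exact Set.iUnion_subset fun r => (Set.image_mono hA).trans
      ((Set.mapsTo_iff_image_subset.1 (hinv i r)))
  have hΨC : ∀ k (A : NonemptyCompacts X), (A : Set X) ⊆ C →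
      (↑(backwardTraj F k A) : Set X) ⊆ C := by
    intro k
    induction k with
    | zero => intro A hA; simpa [backwardTraj] using hA
    | succ k ih =>
      intro A hA
      exact ih (F k A) (hFC k A hA)
  -- distance between two compact subsets of C is at most diam C
  have hedistC : ∀ S T : NonemptyCompacts X, (S : Set X) ⊆ C → (T : Set X) ⊆ C →
      edist S T ≤ EMetric.diam C := by
    intro S T hS hT
    rw [hedist]
    refine EMetric.hausdorffEdist_le_of_infEdist (fun x hx => ?_) (fun x hx => ?_)
    · obtain ⟨y, hy⟩ := T.nonempty
      exact (EMetric.infEdist_le_edist_of_mem hy).trans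
        (EMetric.edist_le_diam_of_mem (hS hx) (hT hy))
    · obtain ⟨y, hy⟩ := S.nonempty
      exact (EMetric.infEdist_le_edist_of_mem hy).trans
        (EMetric.edist_le_diam_of_mem (hT hx) (hS hy))
  -- diameter of C is finite
  have hfin : EMetric.diam C ≠ ⊤ := hCc.isBounded.ediam_ne_top
  set dC : NNReal := (EMetric.diam C).toNNReal with hdC
  have hDC : EMetric.diam C = (dC : ENNReal) := (ENNReal.coe_toNNReal hfin).symm
  -- summability of the product sequence
  have hprodsum : Summable (fun k => ∏ i ∈ Finset.range k, (L i : ℝ)) := by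
    rw [← summable_nat_add_iff 1]
    simpa using hsum
  have hd_summable : Summable (fun k => (∏ i ∈ Finset.range k, L i) * dC) := by
    rw [← NNReal.summable_coe]
    push_cast
    exact hprodsum.mul_right _
  -- products tend to zero
  have hprod0 : Tendsto (fun k => ∏ i ∈ Finset.range k, (L i : ℝ)) atTop (𝓝 0) := by
    rw [← tendsto_add_atTop_iff_nat 1]
    simpa using hsum.tendsto_atTop_zero
  -- each backward trajectory starting in C is Cauchy
  have hCauchy : ∀ A : NonemptyCompacts X, (A : Set X) ⊆ C →
      CauchySeq (fun k => backwardTraj F k A) := by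
    intro A hA
    refine cauchySeq_of_edist_le_of_summable (fun k => (∏ i ∈ Finset.range k, L i) * dC)
      (fun k => ?_) hd_summable
    have h1 : edist (backwardTraj F k A) (backwardTraj F (k + 1) A)
        = edist (backwardTraj F k A) (backwardTraj F k (F k A)) := rfl
    rw [h1]
    calc edist (backwardTraj F k A) (backwardTraj F k (F k A))
        ≤ (∏ i ∈ Finset.range k, L i : NNReal) * edist A (F k A) := hΨlip k A (F k A)
      _ ≤ (∏ i ∈ Finset.range k, L i : NNReal) * (dC : ENNReal) := by
          refine mul_le_mul_right ?_ _
          rw [← hDC]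
          exact hedistC A (F k A) hA (hFC k A hA)
      _ = ((∏ i ∈ Finset.range k, L i) * dC : NNReal) := by push_cast; ring
  -- the base trajectory
  set A₀ : NonemptyCompacts X := ⟨⟨C, hCc⟩, hCne⟩ with hA₀
  have hA₀C : (A₀ : Set X) ⊆ C := subset_rfl
  obtain ⟨P, hP⟩ := cauchySeq_tendsto_of_complete (hCauchy A₀ hA₀C)
  -- all trajectories converge to P
  have hall : ∀ A : NonemptyCompacts X, (A : Set X) ⊆ C →
      Tendsto (fun k => backwardTraj F k A) atTop (𝓝 P) := by
    intro A hA
    rw [tendsto_iff_dist_tendsto_zero]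
    have hbound : ∀ k, dist (backwardTraj F k A) P ≤
        (∏ i ∈ Finset.range k, (L i : ℝ)) * dist A A₀ + dist (backwardTraj F k A₀) P := by
      intro k
      calc dist (backwardTraj F k A) P
          ≤ dist (backwardTraj F k A) (backwardTraj F k A₀)
            + dist (backwardTraj F k A₀) P := dist_triangle _ _ _
        _ ≤ (∏ i ∈ Finset.range k, (L i : ℝ)) * dist A A₀
            + dist (backwardTraj F k A₀) P := by
            gcongr
            have := (hΨlip k).dist_le_mul A A₀
            simpa using this
    have hlim : Tendsto (fun k => (∏ i ∈ Finset.range k, (L i : ℝ)) * dist A A₀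
        + dist (backwardTraj F k A₀) P) atTop (𝓝 0) := by
      have h1 := hprod0.mul_const (dist A A₀)
      have h2 := (tendsto_iff_dist_tendsto_zero.1 hP)
      simpa using h1.add h2
    exact squeeze_zero (fun k => dist_nonneg) hbound hlim
  -- P is contained in C
  have hPC : (P : Set X) ⊆ C := by
    intro x hx
    have hx0 : EMetric.infEdist x C = 0 := by
      refine le_antisymm (ENNReal.le_of_forall_pos_le_add fun ε hε _ => ?_) zero_le
      have hε' : (0 : ENNReal) < ε := by exact_mod_cast hε
      obtain ⟨N, hN⟩ := (EMetric.tendsto_atTop.1 hP) ε hε'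
      have h1 : EMetric.infEdist x C ≤ EMetric.infEdist x
          (↑(backwardTraj F N A₀) : Set X) := EMetric.infEdist_anti (hΨC N A₀ hA₀C)
      have h2 : EMetric.infEdist x (↑(backwardTraj F N A₀) : Set X)
          ≤ edist P (backwardTraj F N A₀) :=
        (hedist P (backwardTraj F N A₀)) ▸ EMetric.infEdist_le_hausdorffEdist_of_mem hx
      have h3 : edist P (backwardTraj F N A₀) < ε := by
        rw [edist_comm]; exact hN N le_rfl
      calc EMetric.infEdist x C ≤ edist P (backwardTraj F N A₀) := h1.trans h2
        _ ≤ ε := h3.le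
        _ ≤ 0 + ε := by rw [zero_add]
    have : x ∈ closure C := EMetric.mem_closure_iff_infEdist_zero.2 hx0
    rwa [hCc.isClosed.closure_eq] at this
  refine ⟨P, ⟨hPC, hall⟩, ?_⟩
  rintro Q ⟨hQC, hQ⟩
  exact tendsto_nhds_unique (hQ A₀ hA₀C) (hall A₀ hA₀C)
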